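/- arXiv:2411.10202 — 3 statements merged into one kernel-verified Lean document; each statement's English description precedes it below -/
import Mathlib

section
/- Let (X,d,μ) be a metric measure space with μ fully supported and finite on balls, and let r > 0. Define the averaging operator A_r u(x) = (1/μ(B_r(x))) ∫_{B_r(x)} u dμ and let A_r^* 1 (x) = ∫_{B_r(x)} μ(B_r(y))^{-1} dμ(y). If ‖A_r^* 1‖_∞ < ∞, then for every p ∈ [1,∞] the operator A_r maps L^p(X,μ) to L^p(X,μ) boundedly with operator norm at most ‖A_r^* 1‖_∞^{1/p}. -/
open MeasureTheory Metric ENNReal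

/-- The averaging operator `A_r u (x) = ⨍_{B_r(x)} u dμ`. -/
noncomputable def avgOp {X : Type*} [MetricSpace X] [MeasurableSpace X]
    (μ : Measure X) (r : ℝ) (u : X → ℝ) (x : X) : ℝ :=
  ((μ (Metric.ball x r)).toReal)⁻¹ * ∫ y in Metric.ball x r, u y ∂μ

/-- Jensen's inequality for `t ↦ t ^ q` on a probability measure. -/
lemma jensen_rpow_aux {α : Type*} [MeasurableSpace α] (ν : Measure α)
    [IsProbabilityMeasure ν] {f : α → ℝ≥0∞} (hf : AEMeasurable f ν) {q : ℝ} (hq : 1 ≤ q) :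
    (∫⁻ a, f a ∂ν) ^ q ≤ ∫⁻ a, f a ^ q ∂ν := by
  have hq0 : q ≠ 0 := by positivity
  have hq0' : (0 : ℝ) ≤ q := by linarith
  have h1q : 1 / q ≤ 1 := by
    rw [div_le_one (by linarith)]; linarith
  have h := lintegral_mul_norm_pow_le (μ := ν) (f := fun a => f a ^ q)
      (g := fun _ => (1 : ℝ≥0∞)) (hf.pow_const q) aemeasurable_const
      (p := 1 / q) (q := 1 - 1 / q) (by positivity) (by linarith) (by ring)
  have hsimp : ∀ a : α, ((f a ^ q) ^ (1 / q) : ℝ≥0∞) = f a := by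
    intro a
    rw [← ENNReal.rpow_mul, mul_one_div_cancel hq0, ENNReal.rpow_one]
  simp only [ENNReal.one_rpow, mul_one, hsimp, lintegral_one, measure_univ] at h
  calc (∫⁻ a, f a ∂ν) ^ q ≤ ((∫⁻ a, f a ^ q ∂ν) ^ (1 / q)) ^ q :=
        ENNReal.rpow_le_rpow h hq0'
    _ = ∫⁻ a, f a ^ q ∂ν := by
        rw [← ENNReal.rpow_mul, one_div_mul_cancel hq0, ENNReal.rpow_one]

/-- A metric space carrying a σ-finite fully supported measure is second countable. -/
lemma secondCountable_aux {X : Type*} [MetricSpace X] [MeasurableSpace X] [BorelSpace X]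
    (μ : Measure X) [SFinite μ]
    (hfull : ∀ (x : X) (s : ℝ), 0 < s → 0 < μ (Metric.ball x s)) :
    SecondCountableTopology X := by
  refine Metric.secondCountable_of_almost_dense_set fun ε hε => ?_
  set C : Set (Set X) := {s | ∀ x ∈ s, ∀ y ∈ s, x ≠ y → ε ≤ dist x y} with hC
  obtain ⟨M, hM⟩ : ∃ m, Maximal (· ∈ C) m := by
    apply zorn_subset
    intro c hcC hchain
    refine ⟨⋃₀ c, ?_, fun s hs => Set.subset_sUnion_of_mem hs⟩
    rintro x ⟨s, hs, hxs⟩ y ⟨t, ht, hyt⟩ hxy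
    rcases hchain.total hs ht with h | h
    · exact hcC ht x (h hxs) y hyt hxy
    · exact hcC hs x hxs y (h hyt) hxy
  have hMC : M ∈ C := hM.prop
  have hdisj : Pairwise (Function.onFun Disjoint fun m : M => Metric.ball (m : X) (ε / 2)) := by
    rintro a b hab
    refine Metric.ball_disjoint_ball ?_
    rw [show ε / 2 + ε / 2 = ε by ring]
    exact hMC a a.2 b b.2 (fun h => hab (Subtype.ext h))
  have hcnt : Set.Countable {i : M | 0 < μ (Metric.ball (i : X) (ε / 2))} :=
    MeasureTheory.Measure.countable_meas_pos_of_disjoint_iUnion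
      (fun _ => measurableSet_ball) hdisj
  have huniv : {i : M | 0 < μ (Metric.ball (i : X) (ε / 2))} = Set.univ :=
    Set.eq_univ_of_forall fun i => hfull _ _ (by linarith)
  have hMcnt : M.Countable := by
    rw [huniv] at hcnt
    exact Set.countable_coe_iff.mp (Set.countable_univ_iff.mp hcnt)
  refine ⟨M, hMcnt, fun x => ?_⟩
  by_contra hcon
  push_neg at hcon
  have hxM : x ∉ M := fun hx => absurd (hcon x hx) (by simp [le_of_lt hε])
  have hins : insert x M ∈ C := by
    rintro a (rfl | ha) b (rfl | hb) hab
    · exact absurd rfl hab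
    · exact le_of_lt (hcon b hb)
    · rw [dist_comm]; exact le_of_lt (hcon a ha)
    · exact hMC a ha b hb hab
  exact hxM (hM.2 hins (Set.subset_insert x M) (Set.mem_insert x M))

/-- The Fubini–Tonelli / duality step: integrating the averaged function against `μ` costs at
most a factor `K`. -/
lemma fubini_avg_aux {X : Type*} [MetricSpace X] [MeasurableSpace X] [BorelSpace X]
    [SecondCountableTopology X] (μ : Measure X) [SFinite μ] (r : ℝ)
    (measV : Measurable fun x => μ (Metric.ball x r))
    (K : ℝ≥0∞) (hK : ∀ y : X, ∫⁻ x in Metric.ball y r, (μ (Metric.ball x r))⁻¹ ∂μ ≤ K)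
    {h : X → ℝ≥0∞} (hh : Measurable h) :
    ∫⁻ x, (μ (Metric.ball x r))⁻¹ * ∫⁻ y in Metric.ball x r, h y ∂μ ∂μ
      ≤ K * ∫⁻ y, h y ∂μ := by
  have hopen : MeasurableSet {p : X × X | dist p.1 p.2 < r} :=
    (isOpen_lt (continuous_fst.dist continuous_snd) continuous_const).measurableSet
  set F : X → X → ℝ≥0∞ := fun x y =>
    Set.indicator {p : X × X | dist p.1 p.2 < r}
      (fun p => (μ (Metric.ball p.1 r))⁻¹ * h p.2) (x, y) with hF
  have hFmeas : Measurable (Function.uncurry F) := by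
    have : Function.uncurry F = Set.indicator {p : X × X | dist p.1 p.2 < r}
        (fun p => (μ (Metric.ball p.1 r))⁻¹ * h p.2) := rfl
    rw [this]
    exact (((measV.comp measurable_fst).inv).mul (hh.comp measurable_snd)).indicator hopen
  have step1 : ∀ x, (μ (Metric.ball x r))⁻¹ * ∫⁻ y in Metric.ball x r, h y ∂μ
      = ∫⁻ y, F x y ∂μ := by
    intro x
    have : ∀ y, F x y = Set.indicator (Metric.ball x r)
        (fun y => (μ (Metric.ball x r))⁻¹ * h y) y := by
      intro y
      simp only [hF, Set.indicator, Set.mem_setOf_eq, Metric.mem_ball, dist_comm y x]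
    simp only [this]
    rw [lintegral_indicator measurableSet_ball, lintegral_const_mul _ hh]
  have step3 : ∀ y, ∫⁻ x, F x y ∂μ
      = (∫⁻ x in Metric.ball y r, (μ (Metric.ball x r))⁻¹ ∂μ) * h y := by
    intro y
    have : ∀ x, F x y = Set.indicator (Metric.ball y r)
        (fun x => (μ (Metric.ball x r))⁻¹ * h y) x := by
      intro x
      simp only [hF, Set.indicator, Set.mem_setOf_eq, Metric.mem_ball]
    simp only [this]
    rw [lintegral_indicator measurableSet_ball, lintegral_mul_const _ (show Measurable fun x => (μ (Metric.ball x r))⁻¹ from measV.inv)]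
  calc ∫⁻ x, (μ (Metric.ball x r))⁻¹ * ∫⁻ y in Metric.ball x r, h y ∂μ ∂μ
      = ∫⁻ x, ∫⁻ y, F x y ∂μ ∂μ := by simp only [step1]
    _ = ∫⁻ y, ∫⁻ x, F x y ∂μ ∂μ := lintegral_lintegral_swap hFmeas.aemeasurable
    _ = ∫⁻ y, (∫⁻ x in Metric.ball y r, (μ (Metric.ball x r))⁻¹ ∂μ) * h y ∂μ := by
        simp only [step3]
    _ ≤ ∫⁻ y, K * h y ∂μ :=
        lintegral_mono fun y => mul_le_mul_left (hK y) _
    _ = K * ∫⁻ y, h y ∂μ := lintegral_const_mul K hh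

/-- If `‖A_r^* 1‖_∞ = sup_x ∫_{B_r(x)} μ(B_r(y))⁻¹ dμ(y) < ∞`, then for every `p ∈ [1, ∞]`
the averaging operator `A_r` maps `L^p(X, μ)` to `L^p(X, μ)` boundedly, with norm at most
`‖A_r^* 1‖_∞^(1/p)`. -/
theorem avgOp_memLp_and_eLpNorm_le
    {X : Type*} [MetricSpace X] [MeasurableSpace X] [BorelSpace X]
    (μ : Measure X) (r : ℝ) (hr : 0 < r)
    (hfull : ∀ (x : X) (s : ℝ), 0 < s → 0 < μ (Metric.ball x s))
    (hballs : ∀ (x : X) (s : ℝ), μ (Metric.ball x s) < ⊤)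
    (K : ℝ≥0∞)
    (hK : K = ⨆ x : X, ∫⁻ y in Metric.ball x r, (μ (Metric.ball y r))⁻¹ ∂μ)
    (hKtop : K < ⊤)
    (p : ℝ≥0∞) (hp : 1 ≤ p) (u : X → ℝ) (hu : MemLp u p μ) :
    MemLp (avgOp μ r u) p μ ∧
      eLpNorm (avgOp μ r u) p μ ≤ K ^ (1 / p).toReal * eLpNorm u p μ := by
  rcases isEmpty_or_nonempty X with hX | hX
  · have hμ : μ = 0 := μ.eq_zero_of_isEmpty
    subst hμ
    refine ⟨⟨StronglyMeasurable.of_subsingleton_dom.aestronglyMeasurable, by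
      simp [eLpNorm_measure_zero]⟩, by simp [eLpNorm_measure_zero]⟩
  -- σ-finiteness of μ
  haveI : SigmaFinite μ := by
    obtain ⟨x0⟩ := hX
    exact ⟨⟨⟨fun n => Metric.ball x0 n, fun _ => trivial, fun n => hballs x0 n,
      Metric.iUnion_ball_nat x0⟩⟩⟩
  haveI : SecondCountableTopology X := secondCountable_aux μ hfull
  -- measurability of the volume function
  have measV : Measurable fun x => μ (Metric.ball x r) := by
    have hopen : MeasurableSet {p : X × X | dist p.1 p.2 < r} :=
      (isOpen_lt (continuous_fst.dist continuous_snd) continuous_const).measurableSet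
    have hm : Measurable fun p : X × X =>
        Set.indicator {p : X × X | dist p.1 p.2 < r} (fun _ => (1 : ℝ≥0∞)) p :=
      measurable_const.indicator hopen
    have := hm.lintegral_prod_right' (ν := μ)
    convert this using 1
    funext x
    have : ∀ y, Set.indicator {p : X × X | dist p.1 p.2 < r} (fun _ => (1 : ℝ≥0∞)) (x, y)
        = Set.indicator (Metric.ball x r) (fun _ => (1 : ℝ≥0∞)) y := by
      intro y
      simp only [Set.indicator, Set.mem_setOf_eq, Metric.mem_ball, dist_comm y x]
    rw [← lintegral_indicator_one measurableSet_ball]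
    simp only [this]
    rfl
  obtain ⟨g, hg, hug⟩ := hu.1
  have hAeq : avgOp μ r u = avgOp μ r g := by
    funext x
    simp only [avgOp]
    congr 1
    exact integral_congr_ae (ae_restrict_of_ae hug)
  -- strong measurability of `avgOp μ r g`
  have hopen : MeasurableSet {p : X × X | dist p.1 p.2 < r} :=
    (isOpen_lt (continuous_fst.dist continuous_snd) continuous_const).measurableSet
  have hIsm : StronglyMeasurable fun x => ∫ y in Metric.ball x r, g y ∂μ := by
    have hFsm : StronglyMeasurable fun p : X × X =>
        Set.indicator {q : X × X | dist q.1 q.2 < r} (fun q => g q.2) p :=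
      (hg.comp_measurable measurable_snd).indicator hopen
    have := hFsm.integral_prod_right' (ν := μ)
    convert this using 1
    funext x
    have hpt : ∀ y, Set.indicator {q : X × X | dist q.1 q.2 < r} (fun q => g q.2) (x, y)
        = Set.indicator (Metric.ball x r) g y := by
      intro y
      simp only [Set.indicator, Set.mem_setOf_eq, Metric.mem_ball, dist_comm y x]
    rw [← integral_indicator measurableSet_ball]
    simp only [hpt]
  have hAsm : StronglyMeasurable (avgOp μ r g) :=
    (measV.ennreal_toReal.inv.stronglyMeasurable).mul hIsm
  have hAaesm : AEStronglyMeasurable (avgOp μ r u) μ := by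
    rw [hAeq]; exact hAsm.aestronglyMeasurable
  have hguse : eLpNorm g p μ = eLpNorm u p μ := eLpNorm_congr_ae hug.symm
  -- the normalized measure on a ball is a probability measure
  have hV0 : ∀ x : X, μ (Metric.ball x r) ≠ 0 := fun x => (hfull x r hr).ne'
  have hVt : ∀ x : X, μ (Metric.ball x r) ≠ ⊤ := fun x => (hballs x r).ne
  set ν : X → Measure X := fun x =>
    (μ (Metric.ball x r))⁻¹ • μ.restrict (Metric.ball x r) with hν
  have hprob : ∀ x, IsProbabilityMeasure (ν x) := by
    intro x
    constructor
    simp only [hν, Measure.smul_apply, smul_eq_mul,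
      Measure.restrict_apply MeasurableSet.univ, Set.univ_inter]
    exact ENNReal.inv_mul_cancel (hV0 x) (hVt x)
  have hAg : ∀ x, avgOp μ r g x = ∫ y, g y ∂(ν x) := by
    intro x
    simp only [hν, avgOp, integral_smul_measure, smul_eq_mul, ENNReal.toReal_inv]
  by_cases hptop : p = ∞
  · -- the case p = ∞
    subst hptop
    have hbd : ∀ x, (‖avgOp μ r g x‖₊ : ℝ≥0∞) ≤ eLpNormEssSup g μ := by
      intro x
      haveI := hprob x
      calc (‖avgOp μ r g x‖₊ : ℝ≥0∞) = ‖∫ y, g y ∂(ν x)‖₊ := by rw [hAg x]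
        _ ≤ ∫⁻ y, ‖g y‖₊ ∂(ν x) := enorm_integral_le_lintegral_enorm _
        _ ≤ ∫⁻ _, eLpNormEssSup g μ ∂(ν x) := by
            refine lintegral_mono_ae ?_
            have hle : ∀ᵐ y ∂μ, (‖g y‖₊ : ℝ≥0∞) ≤ eLpNormEssSup g μ :=
              ae_le_eLpNormEssSup
            exact Measure.ae_smul_measure (ae_restrict_of_ae hle) _
        _ = eLpNormEssSup g μ := by simp [lintegral_const, measure_univ]
    have hbd' : eLpNorm (avgOp μ r g) ∞ μ ≤ eLpNormEssSup g μ := by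
      rw [eLpNorm_exponent_top]
      exact essSup_le_of_ae_le _ (Filter.Eventually.of_forall hbd)
    have hfin : eLpNorm (avgOp μ r u) ∞ μ ≤ eLpNorm u ∞ μ := by
      rw [hAeq, ← hguse, eLpNorm_exponent_top (f := g)]
      exact hbd'
    refine ⟨⟨hAaesm, hfin.trans_lt hu.2⟩, ?_⟩
    simpa using hfin
  -- the case p < ∞
  have hp0 : p ≠ 0 := (lt_of_lt_of_le zero_lt_one hp).ne'
  set q : ℝ := p.toReal with hqdef
  have hq1 : 1 ≤ q := by
    rw [hqdef, ← ENNReal.toReal_one]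
    exact ENNReal.toReal_mono hptop hp
  have hq0 : q ≠ 0 := by positivity
  have hq0' : (0 : ℝ) ≤ q := by linarith
  -- pointwise Jensen estimate
  have key : ∀ x, (‖avgOp μ r g x‖₊ : ℝ≥0∞) ^ q
      ≤ (μ (Metric.ball x r))⁻¹ * ∫⁻ y in Metric.ball x r, (‖g y‖₊ : ℝ≥0∞) ^ q ∂μ := by
    intro x
    haveI := hprob x
    calc (‖avgOp μ r g x‖₊ : ℝ≥0∞) ^ q = (‖∫ y, g y ∂(ν x)‖₊ : ℝ≥0∞) ^ q := by rw [hAg x]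
      _ ≤ (∫⁻ y, ‖g y‖₊ ∂(ν x)) ^ q :=
          ENNReal.rpow_le_rpow (enorm_integral_le_lintegral_enorm _) hq0'
      _ ≤ ∫⁻ y, (‖g y‖₊ : ℝ≥0∞) ^ q ∂(ν x) := by
          refine jensen_rpow_aux (ν x) ?_ hq1
          exact (hg.comp_measurable measurable_id).measurable.nnnorm.coe_nnreal_ennreal.aemeasurable
      _ = (μ (Metric.ball x r))⁻¹ * ∫⁻ y in Metric.ball x r, (‖g y‖₊ : ℝ≥0∞) ^ q ∂μ := by
          simp only [hν, lintegral_smul_measure, smul_eq_mul]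
  have hgm : Measurable fun y => (‖g y‖₊ : ℝ≥0∞) ^ q :=
    (hg.measurable.nnnorm.coe_nnreal_ennreal).pow_const q
  have hKle : ∀ y : X, ∫⁻ x in Metric.ball y r, (μ (Metric.ball x r))⁻¹ ∂μ ≤ K := by
    intro y
    rw [hK]
    exact le_iSup (fun x => ∫⁻ z in Metric.ball x r, (μ (Metric.ball z r))⁻¹ ∂μ) y
  have main : ∫⁻ x, (‖avgOp μ r g x‖₊ : ℝ≥0∞) ^ q ∂μ
      ≤ K * ∫⁻ y, (‖g y‖₊ : ℝ≥0∞) ^ q ∂μ :=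
    (lintegral_mono key).trans (fubini_avg_aux μ r measV K hKle hgm)
  have hnorm : eLpNorm (avgOp μ r u) p μ ≤ K ^ (1 / q) * eLpNorm u p μ := by
    rw [hAeq, ← hguse, eLpNorm_eq_lintegral_rpow_enorm_toReal hp0 hptop,
      eLpNorm_eq_lintegral_rpow_enorm_toReal hp0 hptop]
    calc (∫⁻ x, (‖avgOp μ r g x‖₊ : ℝ≥0∞) ^ q ∂μ) ^ (1 / q)
        ≤ (K * ∫⁻ y, (‖g y‖₊ : ℝ≥0∞) ^ q ∂μ) ^ (1 / q) :=
          ENNReal.rpow_le_rpow main (by positivity)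
      _ = K ^ (1 / q) * (∫⁻ y, (‖g y‖₊ : ℝ≥0∞) ^ q ∂μ) ^ (1 / q) :=
          ENNReal.mul_rpow_of_nonneg _ _ (by positivity)
  have hexp : (1 / p).toReal = 1 / q := by
    rw [one_div, one_div, ENNReal.toReal_inv]
  refine ⟨⟨hAaesm, ?_⟩, by rw [hexp]; exact hnorm⟩
  refine hnorm.trans_lt (ENNReal.mul_lt_top ?_ hu.2)
  exact ENNReal.rpow_lt_top_of_nonneg (by positivity) hKtop.ne
end

section
/- Let (X,d,μ) be a compact metric measure space with μ fully supported, and let r > 0 be such that sup_{x ∈ X} μ(S_r(x)) = 0, where S_r(x) = {y : d(x,y) = r}. Then the averaging operator A_r maps L^2(X,μ) into C(X) (continuous functions), is a compact operator from L^2(X,μ) to C(X) with the sup norm, and ‖A_r‖_{L^2 → C(X)} ≤ m(r)^{-1/2} where m(r) = inf_{x∈X} μ(B_r(x)). -/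
open MeasureTheory Metric ENNReal Filter Topology

section AuxLemmas

variable {Y : Type*} [MetricSpace Y] [MeasurableSpace Y] [BorelSpace Y]

omit [MetricSpace Y] [BorelSpace Y] in
lemma cs_setIntegral (μ : Measure Y) (f : Lp ℝ 2 μ) {s : Set Y} (hs : MeasurableSet s)
    (hμs : μ s ≠ ∞) :
    |∫ y in s, f y ∂μ| ≤ ‖f‖ * Real.sqrt ((μ s).toReal) := by
  have h := MeasureTheory.L2.inner_indicatorConstLp_one (𝕜 := ℝ) hs hμs f
  rw [← h]
  calc |(inner ℝ (indicatorConstLp 2 hs hμs (1:ℝ)) f : ℝ)|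
      ≤ ‖indicatorConstLp 2 hs hμs (1:ℝ)‖ * ‖f‖ := abs_real_inner_le_norm _ _
    _ = ‖f‖ * Real.sqrt ((μ s).toReal) := by
        rw [norm_indicatorConstLp two_ne_zero ENNReal.ofNat_ne_top]
        rw [Real.sqrt_eq_rpow]
        norm_num [mul_comm, Measure.real]

lemma annulus_small (μ : Measure Y) [IsFiniteMeasure μ] (r : ℝ) (x : Y)
    (hsph : μ (Metric.sphere x r) = 0) {η : ℝ} (hη : 0 < η) :
    ∃ δ > 0, (μ (Metric.closedBall x (r + δ) \ Metric.ball x (r - δ))).toReal < η := by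
  set s : ℕ → Set Y := fun n => Metric.closedBall x (r + 1/(n+1)) \ Metric.ball x (r - 1/(n+1))
    with hs
  have hmeas : ∀ n, NullMeasurableSet (s n) μ := fun n =>
    (measurableSet_closedBall.diff measurableSet_ball).nullMeasurableSet
  have hanti : Antitone s := by
    intro a b hab
    have h1 : (1:ℝ)/(b+1) ≤ 1/(a+1) := by
      apply one_div_le_one_div_of_le (by positivity)
      exact_mod_cast Nat.succ_le_succ hab
    exact Set.diff_subset_diff (Metric.closedBall_subset_closedBall (by linarith))
      (Metric.ball_subset_ball (by linarith))
  have hint : ⋂ n, s n = Metric.sphere x r := by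
    ext y
    simp only [hs, Set.mem_iInter, Set.mem_diff, Metric.mem_closedBall, Metric.mem_ball,
      Metric.mem_sphere, not_lt]
    constructor
    · intro h
      refine le_antisymm ?_ ?_
      · by_contra hlt
        push_neg at hlt
        obtain ⟨n, hn⟩ := exists_nat_one_div_lt (show (0:ℝ) < dist y x - r by linarith)
        have := (h n).1
        push_cast at hn this ⊢
        linarith
      · by_contra hlt
        push_neg at hlt
        obtain ⟨n, hn⟩ := exists_nat_one_div_lt (show (0:ℝ) < r - dist y x by linarith)
        have := (h n).2
        push_cast at hn this ⊢
        linarith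
    · intro h n
      have : (0:ℝ) < 1/(n+1) := by positivity
      constructor <;> linarith
  have htend : Tendsto (fun n => μ (s n)) atTop (𝓝 0) := by
    have h := tendsto_measure_iInter_atTop hmeas hanti ⟨0, (measure_lt_top μ _).ne⟩
    rw [hint, hsph] at h
    exact h
  have hev : ∀ᶠ n in atTop, μ (s n) < ENNReal.ofReal η := by
    refine htend.eventually_lt_const ?_
    simpa using hη
  obtain ⟨n, hn⟩ := hev.exists
  refine ⟨1/(n+1), by positivity, ?_⟩
  exact ENNReal.toReal_lt_of_lt_ofReal hn

end AuxLemmas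

/-- On a compact metric measure space with fully supported `μ`, if all spheres of radius `r`
are `μ`-null, then `A_r` maps `L²(X, μ)` into `C(X)`, is a compact operator from `L²(X, μ)`
to `C(X)`, and `‖A_r‖_{L² → C(X)} ≤ m(r)^{-1/2}` where `m(r) = inf_x μ(B_r(x))`. -/
theorem avgOp_compact_into_continuous
    {X : Type*} [MetricSpace X] [CompactSpace X] [MeasurableSpace X] [BorelSpace X]
    (μ : Measure X)
    (hfull : ∀ (x : X) (s : ℝ), 0 < s → 0 < μ (Metric.ball x s))
    (hballs : ∀ (x : X) (s : ℝ), μ (Metric.ball x s) < ⊤)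
    (r : ℝ) (hr : 0 < r)
    (hsph : ∀ x : X, μ (Metric.sphere x r) = 0) :
    (∀ u : X → ℝ, MemLp u 2 μ → Continuous (avgOp μ r u)) ∧
      ∃ T : Lp ℝ 2 μ →L[ℝ] C(X, ℝ), IsCompactOperator T ∧
        (∀ u : Lp ℝ 2 μ, ∀ x : X, T u x = avgOp μ r (u : X → ℝ) x) ∧
        ‖T‖ ≤ 1 / Real.sqrt ((⨅ x : X, μ (Metric.ball x r)).toReal) := by
  classical
  have hfin : IsFiniteMeasure μ := by
    rcases isEmpty_or_nonempty X with hX | hX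
    · refine ⟨?_⟩
      simp [Set.univ_eq_empty_iff.2 hX]
    · obtain ⟨x₀⟩ := hX
      obtain ⟨R, hR⟩ := (isCompact_univ (X := X)).isBounded.subset_closedBall x₀
      refine ⟨lt_of_le_of_lt (measure_mono (hR.trans (Metric.closedBall_subset_ball (lt_add_one R)))) (hballs x₀ _)⟩
  rcases isEmpty_or_nonempty X with hX | hX
  · refine ⟨fun u hu => continuous_of_const (fun x => (IsEmpty.false x).elim), 0,
      isCompactOperator_zero, fun u x => (IsEmpty.false x).elim, ?_⟩
    rw [show ‖(0 : Lp ℝ 2 μ →L[ℝ] C(X, ℝ))‖ = 0 from ContinuousLinearMap.opNorm_zero]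
    positivity
  -- main case
  obtain ⟨x₀⟩ := hX
  -- positivity of the infimum
  obtain ⟨t, ht⟩ := (isCompact_univ (X := X)).elim_finite_subcover
    (fun x : X => Metric.ball x (r/2)) (fun _ => isOpen_ball)
    (fun x _ => Set.mem_iUnion.2 ⟨x, Metric.mem_ball_self (by linarith)⟩)
  have htne : t.Nonempty := by
    obtain ⟨i, hi, _⟩ := Set.mem_iUnion₂.1 (ht (Set.mem_univ x₀))
    exact ⟨i, hi⟩
  set c : ℝ≥0∞ := t.inf' htne fun i => μ (Metric.ball i (r/2)) with hc
  have hc0 : 0 < c := by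
    rw [hc, Finset.lt_inf'_iff]
    exact fun i _ => hfull i _ (by linarith)
  have hcle : ∀ x : X, c ≤ μ (Metric.ball x r) := by
    intro x
    obtain ⟨i, hi, hxi⟩ := Set.mem_iUnion₂.1 (ht (Set.mem_univ x))
    have hsub : Metric.ball i (r/2) ⊆ Metric.ball x r := by
      intro y hy
      rw [Metric.mem_ball] at hy hxi ⊢
      have : dist y x ≤ dist y i + dist i x := dist_triangle _ _ _
      rw [dist_comm i x] at this
      linarith
    exact le_trans (Finset.inf'_le _ hi) (measure_mono hsub)
  have hMinf_le : ∀ x : X, (⨅ x : X, μ (Metric.ball x r)) ≤ μ (Metric.ball x r) :=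
    fun x => iInf_le _ x
  have hMinf_pos : 0 < ⨅ x : X, μ (Metric.ball x r) := lt_of_lt_of_le hc0 (le_iInf hcle)
  have hMinf_ne_top : (⨅ x : X, μ (Metric.ball x r)) ≠ ⊤ :=
    (lt_of_le_of_lt (hMinf_le x₀) (hballs x₀ r)).ne
  set m : ℝ := (⨅ x : X, μ (Metric.ball x r)).toReal with hmdef
  have hm0 : 0 < m := ENNReal.toReal_pos hMinf_pos.ne' hMinf_ne_top
  have hm_le : ∀ x : X, m ≤ (μ (Metric.ball x r)).toReal :=
    fun x => ENNReal.toReal_mono (hballs x r).ne (hMinf_le x)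
  have ha_pos : ∀ x : X, 0 < (μ (Metric.ball x r)).toReal :=
    fun x => lt_of_lt_of_le hm0 (hm_le x)
  set C : ℝ := 1 / Real.sqrt m with hCdef
  have hC0 : 0 ≤ C := by positivity
  -- pointwise bound
  have hpt : ∀ (f : Lp ℝ 2 μ) (x : X), |avgOp μ r (f : X → ℝ) x| ≤ C * ‖f‖ := by
    intro f x
    have ha0 : 0 < (μ (Metric.ball x r)).toReal := ha_pos x
    have h1 := cs_setIntegral μ f measurableSet_ball (hballs x r).ne
    have hsa : 0 < Real.sqrt (μ (Metric.ball x r)).toReal := Real.sqrt_pos.2 ha0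
    have hsm : 0 < Real.sqrt m := Real.sqrt_pos.2 hm0
    have heq : |avgOp μ r (f : X → ℝ) x|
        = ((μ (Metric.ball x r)).toReal)⁻¹ * |∫ y in Metric.ball x r, f y ∂μ| := by
      rw [avgOp, abs_mul, abs_of_nonneg (inv_nonneg.2 ha0.le)]
    rw [heq]
    have h2 : ((μ (Metric.ball x r)).toReal)⁻¹ * |∫ y in Metric.ball x r, f y ∂μ|
        ≤ ((μ (Metric.ball x r)).toReal)⁻¹ * (‖f‖ * Real.sqrt (μ (Metric.ball x r)).toReal) := by
      gcongr
    refine h2.trans ?_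
    have hms : Real.sqrt (μ (Metric.ball x r)).toReal * Real.sqrt (μ (Metric.ball x r)).toReal
        = (μ (Metric.ball x r)).toReal := Real.mul_self_sqrt ha0.le
    have e1 : ((μ (Metric.ball x r)).toReal)⁻¹ * (‖f‖ * Real.sqrt (μ (Metric.ball x r)).toReal)
        = ‖f‖ * (Real.sqrt (μ (Metric.ball x r)).toReal)⁻¹ := by
      have hinv : ((μ (Metric.ball x r)).toReal)⁻¹
          = (Real.sqrt (μ (Metric.ball x r)).toReal)⁻¹ * (Real.sqrt (μ (Metric.ball x r)).toReal)⁻¹ := by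
        rw [← mul_inv, hms]
      rw [hinv]
      field_simp
    rw [e1]
    have e2 : (Real.sqrt (μ (Metric.ball x r)).toReal)⁻¹ ≤ (Real.sqrt m)⁻¹ := by
      gcongr
      exact hm_le x
    calc ‖f‖ * (Real.sqrt (μ (Metric.ball x r)).toReal)⁻¹
        ≤ ‖f‖ * (Real.sqrt m)⁻¹ := mul_le_mul_of_nonneg_left e2 (norm_nonneg f)
      _ = C * ‖f‖ := by rw [hCdef]; ring
  -- key modulus of continuity estimate
  have hkey : ∀ (x : X) (ε : ℝ), 0 < ε → ∃ δ > 0, ∀ x' : X, dist x x' < δ →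
      ∀ f : Lp ℝ 2 μ,
        |avgOp μ r (f : X → ℝ) x' - avgOp μ r (f : X → ℝ) x| ≤ ε * ‖f‖ := by
    intro x ε hε
    set M : ℝ := (μ Set.univ).toReal with hM
    set g : ℝ → ℝ := fun D => m⁻¹ * (2 * Real.sqrt D) + m⁻¹ * m⁻¹ * D * Real.sqrt M with hg
    have hgc : ContinuousAt g 0 := by
      apply Continuous.continuousAt
      fun_prop
    have hg0 : g 0 = 0 := by simp [hg]
    obtain ⟨η, hη0, hηg⟩ := Metric.continuousAt_iff.1 hgc ε hε
    obtain ⟨δ, hδ0, hδann⟩ := annulus_small μ r x (hsph x) hη0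
    refine ⟨δ, hδ0, fun x' hxx' f => ?_⟩
    set B := Metric.ball x r with hB
    set B' := Metric.ball x' r with hB'
    set ann := Metric.closedBall x (r + δ) \ Metric.ball x (r - δ) with hann
    set D : ℝ := (μ ann).toReal with hD
    have hD0 : 0 ≤ D := ENNReal.toReal_nonneg
    have hDη : D < η := hδann
    -- subset facts
    have hdxx : dist x' x < δ := by rw [dist_comm]; exact hxx'
    have hsub1 : B' \ B ⊆ ann := by
      rintro y ⟨hy1, hy2⟩
      rw [Metric.mem_ball] at hy1 hy2
      push_neg at hy2
      have h3 : dist y x ≤ dist y x' + dist x' x := dist_triangle y x' x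
      constructor
      · rw [Metric.mem_closedBall]
        linarith [hdxx]
      · rw [Metric.mem_ball]
        push_neg
        linarith
    have hsub2 : B \ B' ⊆ ann := by
      rintro y ⟨hy1, hy2⟩
      rw [Metric.mem_ball] at hy1 hy2
      push_neg at hy2
      have h4 : dist y x' ≤ dist y x + dist x x' := dist_triangle y x x'
      constructor
      · rw [Metric.mem_closedBall]
        linarith
      · rw [Metric.mem_ball]
        push_neg
        linarith
    -- real measure facts
    have hann_ne : μ ann ≠ ⊤ := measure_ne_top μ _
    have hd1 : (μ (B \ B')).toReal ≤ D := ENNReal.toReal_mono hann_ne (measure_mono hsub2)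
    have hd2 : (μ (B' \ B)).toReal ≤ D := ENNReal.toReal_mono hann_ne (measure_mono hsub1)
    set a : ℝ := (μ B).toReal with haa
    set a' : ℝ := (μ B').toReal with haa'
    have ha0 : 0 < a := ha_pos x
    have ha'0 : 0 < a' := ha_pos x'
    have hma : m ≤ a := hm_le x
    have hma' : m ≤ a' := hm_le x'
    have haM : a ≤ M := ENNReal.toReal_mono (measure_ne_top μ _) (measure_mono (Set.subset_univ _))
    have ha'M : a' ≤ M :=
      ENNReal.toReal_mono (measure_ne_top μ _) (measure_mono (Set.subset_univ _))
    have haa'_diff : |a' - a| ≤ D := by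
      have key : ∀ s s' : Set X, s' ⊆ s ∪ ann →
          (μ s').toReal ≤ (μ s).toReal + D := by
        intro s s' hsub
        calc (μ s').toReal ≤ (μ (s ∪ ann)).toReal :=
              ENNReal.toReal_mono
                (((measure_union_le _ _).trans_lt
                  (ENNReal.add_lt_top.2 ⟨measure_lt_top μ _, measure_lt_top μ _⟩)).ne)
                (measure_mono hsub)
          _ ≤ (μ s + μ ann).toReal :=
              ENNReal.toReal_mono
                (ENNReal.add_ne_top.2 ⟨measure_ne_top μ _, measure_ne_top μ _⟩)
                (measure_union_le _ _)
          _ = (μ s).toReal + D := by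
              rw [ENNReal.toReal_add (measure_ne_top μ _) (measure_ne_top μ _)]
      have h1 : a' ≤ a + D := key B B' (fun y hy => by
        by_cases hyB : y ∈ B
        · exact Or.inl hyB
        · exact Or.inr (hsub1 ⟨hy, hyB⟩))
      have h2 : a ≤ a' + D := key B' B (fun y hy => by
        by_cases hyB : y ∈ B'
        · exact Or.inl hyB
        · exact Or.inr (hsub2 ⟨hy, hyB⟩))
      rw [abs_le]
      constructor <;> linarith
    -- integral facts
    have hfi : Integrable (f : X → ℝ) μ := (Lp.memLp f).integrable (by norm_num)
    set I : ℝ := ∫ y in B, f y ∂μ with hI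
    set I' : ℝ := ∫ y in B', f y ∂μ with hI'
    have hIbd : |I| ≤ ‖f‖ * Real.sqrt M := by
      refine (cs_setIntegral μ f measurableSet_ball (hballs x r).ne).trans ?_
      gcongr
    have hcs1 : |∫ y in B \ B', f y ∂μ| ≤ ‖f‖ * Real.sqrt D := by
      refine (cs_setIntegral μ f (measurableSet_ball.diff measurableSet_ball)
        (measure_ne_top μ _)).trans ?_
      gcongr
    have hcs2 : |∫ y in B' \ B, f y ∂μ| ≤ ‖f‖ * Real.sqrt D := by
      refine (cs_setIntegral μ f (measurableSet_ball.diff measurableSet_ball)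
        (measure_ne_top μ _)).trans ?_
      gcongr
    have hsplit : I - I' = (∫ y in B \ B', f y ∂μ) - ∫ y in B' \ B, f y ∂μ := by
      have h1 : (∫ y in B ∩ B', (f : X → ℝ) y ∂μ) + (∫ y in B \ B', (f : X → ℝ) y ∂μ) = I :=
        integral_inter_add_diff measurableSet_ball hfi.integrableOn
      have h2 : (∫ y in B' ∩ B, (f : X → ℝ) y ∂μ) + (∫ y in B' \ B, (f : X → ℝ) y ∂μ) = I' :=
        integral_inter_add_diff measurableSet_ball hfi.integrableOn
      rw [Set.inter_comm] at h2
      linarith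
    have hII' : |I' - I| ≤ ‖f‖ * (2 * Real.sqrt D) := by
      rw [abs_sub_comm, hsplit]
      have h := abs_sub_abs_le_abs_sub (0:ℝ) (0:ℝ)
      calc |(∫ y in B \ B', (f : X → ℝ) y ∂μ) - ∫ y in B' \ B, (f : X → ℝ) y ∂μ|
          ≤ |∫ y in B \ B', (f : X → ℝ) y ∂μ| + |∫ y in B' \ B, (f : X → ℝ) y ∂μ| :=
            abs_sub _ _
        _ ≤ ‖f‖ * Real.sqrt D + ‖f‖ * Real.sqrt D := add_le_add hcs1 hcs2
        _ = ‖f‖ * (2 * Real.sqrt D) := by ring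
    -- inverse estimates
    have hinv' : a'⁻¹ ≤ m⁻¹ := by
      gcongr
    have hdiffinv : |a'⁻¹ - a⁻¹| ≤ D / (m * m) := by
      have heq2 : a'⁻¹ - a⁻¹ = (a - a') / (a * a') := by
        field_simp
      rw [heq2, abs_div, abs_of_pos (mul_pos ha0 ha'0)]
      have h1 : |a - a'| ≤ D := by rw [abs_sub_comm]; exact haa'_diff
      have h2 : m * m ≤ a * a' := mul_le_mul hma hma' hm0.le ha0.le
      calc |a - a'| / (a * a') ≤ D / (a * a') := by gcongr
        _ ≤ D / (m * m) := by
            gcongr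
    -- put everything together
    have hexp : avgOp μ r (f : X → ℝ) x' - avgOp μ r (f : X → ℝ) x
        = a'⁻¹ * (I' - I) + (a'⁻¹ - a⁻¹) * I := by
      simp only [avgOp]
      rw [← hB, ← hB', ← haa, ← haa', ← hI, ← hI']
      ring
    rw [hexp]
    have hgD : m⁻¹ * (2 * Real.sqrt D) + m⁻¹ * m⁻¹ * D * Real.sqrt M < ε := by
      have h := hηg (show dist D 0 < η by
        rw [Real.dist_eq, sub_zero, abs_of_nonneg hD0]; exact hDη)
      rw [hg0, Real.dist_eq, sub_zero] at h
      have h2 : g D ≤ |g D| := le_abs_self _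
      have h3 : g D = m⁻¹ * (2 * Real.sqrt D) + m⁻¹ * m⁻¹ * D * Real.sqrt M := by
        simp only [hg]
      exact lt_of_le_of_lt (le_trans (le_of_eq h3.symm) h2) h
    calc |a'⁻¹ * (I' - I) + (a'⁻¹ - a⁻¹) * I|
        ≤ |a'⁻¹ * (I' - I)| + |(a'⁻¹ - a⁻¹) * I| := abs_add_le _ _
      _ = a'⁻¹ * |I' - I| + |a'⁻¹ - a⁻¹| * |I| := by
          rw [abs_mul, abs_mul, abs_of_nonneg (inv_nonneg.2 ha'0.le)]
      _ ≤ m⁻¹ * (‖f‖ * (2 * Real.sqrt D)) + (D / (m * m)) * (‖f‖ * Real.sqrt M) := by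
          have h1 : (0:ℝ) ≤ m⁻¹ := by positivity
          refine add_le_add (mul_le_mul hinv' hII' (abs_nonneg _) h1) ?_
          exact mul_le_mul hdiffinv hIbd (abs_nonneg _) (by positivity)
      _ = ‖f‖ * (m⁻¹ * (2 * Real.sqrt D) + m⁻¹ * m⁻¹ * D * Real.sqrt M) := by ring
      _ ≤ ‖f‖ * ε := mul_le_mul_of_nonneg_left hgD.le (norm_nonneg f)
      _ = ε * ‖f‖ := mul_comm _ _
  -- continuity for Lp elements
  have hcontLp : ∀ f : Lp ℝ 2 μ, Continuous (avgOp μ r (f : X → ℝ)) := by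
    intro f
    rw [Metric.continuous_iff]
    intro x ε hε
    have hε' : 0 < ε / (‖f‖ + 1) := by positivity
    obtain ⟨δ, hδ0, hδ⟩ := hkey x (ε / (‖f‖ + 1)) hε'
    refine ⟨δ, hδ0, fun x' hx' => ?_⟩
    have h1 := hδ x' (by rw [dist_comm]; exact hx') f
    rw [Real.dist_eq]
    have h2 : ε / (‖f‖ + 1) * ‖f‖ < ε := by
      rw [div_mul_eq_mul_div, div_lt_iff₀ (by positivity)]
      have : (0:ℝ) ≤ ‖f‖ := norm_nonneg f
      nlinarith
    exact lt_of_le_of_lt h1 h2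
  -- part 1
  have hcont : ∀ u : X → ℝ, MemLp u 2 μ → Continuous (avgOp μ r u) := by
    intro u hu
    have heq : avgOp μ r u = avgOp μ r ((hu.toLp u : Lp ℝ 2 μ) : X → ℝ) := by
      funext x
      simp only [avgOp]
      congr 1
      refine setIntegral_congr_ae measurableSet_ball ?_
      filter_upwards [hu.coeFn_toLp] with y hy _
      exact hy.symm
    rw [heq]
    exact hcontLp _
  -- the linear map
  have hInt : ∀ f : Lp ℝ 2 μ, Integrable (f : X → ℝ) μ := fun f =>
    (Lp.memLp f).integrable (by norm_num)
  let L : Lp ℝ 2 μ →ₗ[ℝ] C(X, ℝ) :=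
    { toFun := fun f => ⟨avgOp μ r (f : X → ℝ), hcontLp f⟩
      map_add' := by
        intro f g
        ext x
        simp only [ContinuousMap.coe_mk, ContinuousMap.add_apply]
        simp only [avgOp]
        have h1 : (∫ y in Metric.ball x r, ((f + g : Lp ℝ 2 μ) : X → ℝ) y ∂μ)
            = (∫ y in Metric.ball x r, (f : X → ℝ) y ∂μ)
              + ∫ y in Metric.ball x r, (g : X → ℝ) y ∂μ := by
          rw [← integral_add (hInt f).integrableOn (hInt g).integrableOn]
          refine setIntegral_congr_ae measurableSet_ball ?_
          filter_upwards [Lp.coeFn_add f g] with y hy _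
          exact hy
        rw [h1]
        ring
      map_smul' := by
        intro s f
        ext x
        simp only [ContinuousMap.coe_mk, ContinuousMap.smul_apply, RingHom.id_apply,
          smul_eq_mul]
        simp only [avgOp]
        have h1 : (∫ y in Metric.ball x r, ((s • f : Lp ℝ 2 μ) : X → ℝ) y ∂μ)
            = s * ∫ y in Metric.ball x r, (f : X → ℝ) y ∂μ := by
          rw [← smul_eq_mul, ← integral_smul]
          refine setIntegral_congr_ae measurableSet_ball ?_
          filter_upwards [Lp.coeFn_smul s f] with y hy _
          exact hy
        rw [h1]
        ring }
  have hLbound : ∀ f : Lp ℝ 2 μ, ‖L f‖ ≤ C * ‖f‖ := by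
    intro f
    rw [ContinuousMap.norm_le _ (by positivity)]
    intro x
    simpa [Real.norm_eq_abs, L] using hpt f x
  let T : Lp ℝ 2 μ →L[ℝ] C(X, ℝ) := L.mkContinuous C hLbound
  have hTapp : ∀ (u : Lp ℝ 2 μ) (x : X), T u x = avgOp μ r (u : X → ℝ) x := fun u x => rfl
  have hTnorm : ‖T‖ ≤ C := LinearMap.mkContinuous_norm_le L hC0 hLbound
  -- compactness
  have hTcomp : IsCompactOperator T := by
    have hB1 : IsCompact (closure (⇑T '' Metric.closedBall 0 1)) := by
      let e := ContinuousMap.linearIsometryBoundedOfCompact X ℝ ℝ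
      set A : Set C(X, ℝ) := ⇑T '' Metric.closedBall 0 1 with hA
      have hAcomp : IsCompact (closure (⇑e '' A)) := by
        apply BoundedContinuousFunction.arzela_ascoli (Metric.closedBall (0:ℝ) C)
          (isCompact_closedBall _ _)
        · rintro g x ⟨g', ⟨f, hf, rfl⟩, rfl⟩
          rw [Metric.mem_closedBall, Real.dist_eq, sub_zero]
          have hf1 : ‖f‖ ≤ 1 := by
            rwa [Metric.mem_closedBall, dist_zero_right] at hf
          have := hpt f x
          have heq : e (T f) x = avgOp μ r (f : X → ℝ) x := by
            rw [ContinuousMap.linearIsometryBoundedOfCompact_apply_apply]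
            exact hTapp f x
          rw [heq]
          calc |avgOp μ r (f : X → ℝ) x| ≤ C * ‖f‖ := hpt f x
            _ ≤ C * 1 := mul_le_mul_of_nonneg_left hf1 hC0
            _ = C := mul_one C
        · intro x
          rw [Metric.equicontinuousAt_iff]
          intro ε hε
          obtain ⟨δ, hδ0, hδ⟩ := hkey x (ε / 2) (by linarith)
          refine ⟨δ, hδ0, fun y hy i => ?_⟩
          obtain ⟨gb, hgb⟩ := i
          obtain ⟨g', ⟨f, hf, rfl⟩, rfl⟩ := hgb
          have hf1 : ‖f‖ ≤ 1 := by
            rwa [Metric.mem_closedBall, dist_zero_right] at hf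
          have heq1 : ∀ z : X, e (T f) z = avgOp μ r (f : X → ℝ) z := by
            intro z
            rw [ContinuousMap.linearIsometryBoundedOfCompact_apply_apply]
            exact hTapp f z
          simp only [heq1]
          rw [Real.dist_eq, abs_sub_comm]
          have h1 := hδ y (by rw [dist_comm]; exact hy) f
          calc |avgOp μ r (f : X → ℝ) y - avgOp μ r (f : X → ℝ) x| ≤ ε / 2 * ‖f‖ := h1
            _ ≤ ε / 2 * 1 := mul_le_mul_of_nonneg_left hf1 (by linarith)
            _ < ε := by linarith
      have himg : ⇑e.toHomeomorph '' A = ⇑e '' A := rfl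
      have h2 : IsCompact (⇑e.toHomeomorph '' closure A) := by
        rw [Homeomorph.image_closure, himg]
        exact hAcomp
      have h3 := h2.image (e.toHomeomorph.symm.continuous)
      rwa [← Set.image_comp, Homeomorph.symm_comp_self, Set.image_id] at h3
    exact (isCompactOperator_iff_isCompact_closure_image_closedBall
      (T : Lp ℝ 2 μ →ₗ[ℝ] C(X, ℝ)) one_pos).2 hB1
  exact ⟨hcont, T, hTcomp, hTapp, hTnorm⟩
end

section
/- There holds liminf_{r → 0} inf_{p ∈ ℤ^m, p ≠ 0} | r^{-2} ( 1 − ∏_{i : p_i ≠ 0} sinc(p_i r) ) | > 0, where sinc(ρ) = sin(πρ)/(πρ) for ρ ≠ 0 and sinc(0) = 1. -/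
open Filter Topology

/-- The normalized sinc function `sinc(ρ) = sin(πρ)/(πρ)` for `ρ ≠ 0`, `sinc 0 = 1`. -/
noncomputable def sincN (ρ : ℝ) : ℝ :=
  if ρ = 0 then 1 else Real.sin (Real.pi * ρ) / (Real.pi * ρ)

lemma sin_le_aux {x : ℝ} (hx : 0 ≤ x) (hxpi : x ≤ Real.pi) :
    Real.sin x ≤ x * (1 - x ^ 2 / (2 * Real.pi ^ 2)) := by
  have hpi := Real.pi_pos
  have h1 : Real.sin x = 2 * Real.sin (x / 2) * Real.cos (x / 2) := by
    have := Real.sin_two_mul (x / 2)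
    rw [show 2 * (x / 2) = x by ring] at this
    exact this
  have h2 : Real.sin (x / 2) ≤ x / 2 := Real.sin_le (by linarith)
  have h3 : Real.cos (x / 2) = 1 - 2 * Real.sin (x / 4) ^ 2 := by
    have hc : Real.cos (2 * (x / 4)) = 2 * Real.cos (x / 4) ^ 2 - 1 := Real.cos_two_mul _
    have hs : Real.sin (x / 4) ^ 2 + Real.cos (x / 4) ^ 2 = 1 := Real.sin_sq_add_cos_sq _
    have : 2 * (x / 4) = x / 2 := by ring
    rw [this] at hc
    linarith
  have h4 : 2 / Real.pi * (x / 4) ≤ Real.sin (x / 4) :=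
    Real.mul_le_sin (by linarith) (by linarith)
  have h5 : 0 ≤ Real.cos (x / 2) :=
    Real.cos_nonneg_of_mem_Icc ⟨by linarith, by linarith⟩
  have h6 : 0 ≤ Real.sin (x / 2) :=
    Real.sin_nonneg_of_nonneg_of_le_pi (by linarith) (by linarith)
  have h7 : (2 / Real.pi * (x / 4)) ^ 2 ≤ Real.sin (x / 4) ^ 2 :=
    pow_le_pow_left₀ (by positivity) h4 2
  calc Real.sin x = 2 * Real.sin (x / 2) * Real.cos (x / 2) := h1
    _ ≤ 2 * (x / 2) * Real.cos (x / 2) := by nlinarith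
    _ = x * (1 - 2 * Real.sin (x / 4) ^ 2) := by rw [h3]; ring
    _ ≤ x * (1 - x ^ 2 / (2 * Real.pi ^ 2)) := by
        apply mul_le_mul_of_nonneg_left _ hx
        have he : x ^ 2 / (2 * Real.pi ^ 2) = 2 * (2 / Real.pi * (x / 4)) ^ 2 := by
          field_simp; ring
        linarith

lemma abs_sincN_le_of_abs_le {t : ℝ} (h : |t| ≤ 1) : |sincN t| ≤ 1 - t ^ 2 / 2 := by
  have hpi := Real.pi_pos
  unfold sincN
  split_ifs with h0
  · simp [h0]
  · have habs : (0:ℝ) < |t| := abs_pos.mpr h0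
    rw [abs_div]
    have h1 : |Real.sin (Real.pi * t)| = Real.sin (Real.pi * |t|) := by
      have e : |Real.sin (Real.pi * t)| = |Real.sin (Real.pi * |t|)| := by
        rcases abs_cases t with ⟨he, _⟩ | ⟨he, _⟩
        · rw [he]
        · rw [he, mul_neg, Real.sin_neg, abs_neg]
      rw [e]
      exact abs_of_nonneg (Real.sin_nonneg_of_nonneg_of_le_pi (by positivity)
        (by nlinarith))
    have h2 : |Real.pi * t| = Real.pi * |t| := by
      rw [abs_mul, abs_of_pos hpi]
    rw [h1, h2]
    have h3 : Real.sin (Real.pi * |t|) ≤ (Real.pi * |t|) * (1 - (Real.pi * |t|) ^ 2 / (2 * Real.pi ^ 2)) :=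
      sin_le_aux (by positivity) (by nlinarith)
    have h4 : (Real.pi * |t|) ^ 2 / (2 * Real.pi ^ 2) = t ^ 2 / 2 := by
      rw [mul_pow, sq_abs]
      field_simp
    rw [h4] at h3
    rw [div_le_iff₀ (by positivity)]
    linarith

lemma abs_sincN_le_half {t : ℝ} (h : 1 ≤ |t|) : |sincN t| ≤ 1 / 2 := by
  have hpi := Real.pi_pos
  have h0 : t ≠ 0 := by intro h0; rw [h0] at h; simp at h; linarith
  unfold sincN
  rw [if_neg h0, abs_div]
  have h2 : |Real.pi * t| = Real.pi * |t| := by rw [abs_mul, abs_of_pos hpi]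
  rw [h2, div_le_iff₀ (by positivity)]
  have := Real.abs_sin_le_one (Real.pi * t)
  have h2pi := Real.two_le_pi
  nlinarith

lemma abs_sincN_le_one (t : ℝ) : |sincN t| ≤ 1 := by
  rcases le_or_gt (|t|) 1 with h | h
  · have := abs_sincN_le_of_abs_le h
    nlinarith [sq_nonneg t]
  · linarith [abs_sincN_le_half h.le]

/-- `liminf_{r → 0⁺} inf_{0 ≠ p ∈ ℤ^m} | r⁻² (1 − ∏_{i : pᵢ ≠ 0} sinc(pᵢ r)) | > 0`. -/
theorem liminf_inf_sinc_pos (m : ℕ) (hm : 1 ≤ m) :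
    0 < Filter.liminf (fun r : ℝ =>
        ⨅ p : {p : Fin m → ℤ // p ≠ 0},
          |(1 / r ^ 2) *
            (1 - ∏ i ∈ Finset.univ.filter (fun i => p.1 i ≠ 0), sincN ((p.1 i : ℝ) * r))|)
      (𝓝[>] (0 : ℝ)) := by
  have hpi := Real.pi_pos
  set F : ℝ → ℝ := fun r =>
      ⨅ p : {p : Fin m → ℤ // p ≠ 0},
        |(1 / r ^ 2) *
          (1 - ∏ i ∈ Finset.univ.filter (fun i => p.1 i ≠ 0), sincN ((p.1 i : ℝ) * r))| with hF
  -- the distinguished index and vector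
  let i₀ : Fin m := ⟨0, hm⟩
  let p₀ : Fin m → ℤ := fun j => if j = i₀ then 1 else 0
  have hp₀ : p₀ ≠ 0 := by
    intro h
    have := congrFun h i₀
    simp [p₀] at this
  have hne : Nonempty {p : Fin m → ℤ // p ≠ 0} := ⟨⟨p₀, hp₀⟩⟩
  -- key pointwise lower bound
  have key : ∀ r : ℝ, 0 < r → r ≤ 1 → ∀ p : {p : Fin m → ℤ // p ≠ 0},
      (1:ℝ)/2 ≤ |(1 / r ^ 2) *
        (1 - ∏ i ∈ Finset.univ.filter (fun i => p.1 i ≠ 0), sincN ((p.1 i : ℝ) * r))| := by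
    intro r hr hr1 p
    obtain ⟨i, hi⟩ : ∃ i, p.1 i ≠ 0 := by
      by_contra h
      push_neg at h
      exact p.2 (funext fun j => h j)
    set S := Finset.univ.filter (fun i => p.1 i ≠ 0) with hS
    have hiS : i ∈ S := by simp [hS, hi]
    set P := ∏ j ∈ S, sincN ((p.1 j : ℝ) * r) with hP
    have habsP : |P| ≤ |sincN ((p.1 i : ℝ) * r)| := by
      rw [hP, ← Finset.prod_erase_mul S _ hiS, abs_mul]
      have h1 : |∏ j ∈ S.erase i, sincN ((p.1 j : ℝ) * r)| ≤ 1 := by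
        rw [Finset.abs_prod]
        exact Finset.prod_le_one (fun j _ => abs_nonneg _)
          (fun j _ => abs_sincN_le_one _)
      calc |∏ j ∈ S.erase i, sincN ((p.1 j : ℝ) * r)| * |sincN ((p.1 i : ℝ) * r)|
          ≤ 1 * |sincN ((p.1 i : ℝ) * r)| :=
            mul_le_mul_of_nonneg_right h1 (abs_nonneg _)
        _ = _ := one_mul _
    have hpir : r ≤ |(p.1 i : ℝ) * r| := by
      rw [abs_mul, abs_of_pos hr]
      have : (1:ℝ) ≤ |(p.1 i : ℝ)| := by
        have : (1:ℤ) ≤ |p.1 i| := Int.one_le_abs hi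
        calc (1:ℝ) ≤ ((|p.1 i| : ℤ) : ℝ) := by exact_mod_cast this
          _ = |(p.1 i : ℝ)| := by push_cast; ring
      nlinarith
    have hsinc : |sincN ((p.1 i : ℝ) * r)| ≤ 1 - r ^ 2 / 2 := by
      rcases le_or_gt (|(p.1 i : ℝ) * r|) 1 with h | h
      · have := abs_sincN_le_of_abs_le h
        have hsq : r ^ 2 ≤ ((p.1 i : ℝ) * r) ^ 2 := by
          nlinarith [abs_nonneg ((p.1 i : ℝ) * r), sq_abs ((p.1 i : ℝ) * r)]
        linarith
      · have := abs_sincN_le_half h.le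
        nlinarith
    have hPle : P ≤ 1 - r ^ 2 / 2 := le_trans (le_abs_self _) (le_trans habsP hsinc)
    have h1P : r ^ 2 / 2 ≤ 1 - P := by linarith
    have : (1:ℝ)/2 ≤ (1 / r ^ 2) * (1 - P) := by
      rw [div_mul_eq_mul_div, one_mul, le_div_iff₀ (by positivity)]
      nlinarith
    calc (1:ℝ)/2 ≤ (1 / r ^ 2) * (1 - P) := this
      _ ≤ |(1 / r ^ 2) * (1 - P)| := le_abs_self _
  -- lower bound eventually
  have hlb : ∀ᶠ r in 𝓝[>] (0:ℝ), (1:ℝ)/2 ≤ F r := by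
    filter_upwards [Ioo_mem_nhdsGT_of_mem (by norm_num : (0:ℝ) ∈ Set.Ico (0:ℝ) 1)]
      with r hr
    exact le_ciInf (fun p => key r hr.1 hr.2.le p)
  -- upper bound eventually, at the vector p₀
  have hub : ∀ᶠ r in 𝓝[>] (0:ℝ), F r ≤ 3 := by
    have hmem : Set.Ioo (0:ℝ) (1 / Real.pi) ∈ 𝓝[>] (0:ℝ) :=
      Ioo_mem_nhdsGT_of_mem ⟨le_refl 0, by positivity⟩
    filter_upwards [hmem] with r hr
    have hr : 0 < r := hr.1
    have hrpi : Real.pi * r < 1 := by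
      have := ‹r ∈ Set.Ioo (0:ℝ) (1 / Real.pi)›.2
      rw [lt_div_iff₀ hpi] at this
      linarith
    have hfilter : Finset.univ.filter (fun i => p₀ i ≠ 0) = {i₀} := by
      ext j
      simp only [Finset.mem_filter, Finset.mem_univ, true_and, Finset.mem_singleton, p₀]
      constructor
      · intro h; by_contra hj; simp [hj] at h
      · intro h; simp [h]
    have hprod : ∏ i ∈ Finset.univ.filter (fun i => p₀ i ≠ 0), sincN ((p₀ i : ℝ) * r)
        = sincN r := by
      rw [hfilter, Finset.prod_singleton]
      simp [p₀]
    have hFle : F r ≤ |(1 / r ^ 2) * (1 - sincN r)| := by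
      have hbdd : BddBelow (Set.range (fun p : {p : Fin m → ℤ // p ≠ 0} =>
          |(1 / r ^ 2) *
            (1 - ∏ i ∈ Finset.univ.filter (fun i => p.1 i ≠ 0), sincN ((p.1 i : ℝ) * r))|)) := by
        refine ⟨0, ?_⟩
        rintro _ ⟨p, rfl⟩
        positivity
      have := ciInf_le hbdd (⟨p₀, hp₀⟩ : {p : Fin m → ℤ // p ≠ 0})
      rw [hprod] at this
      exact this
    have hsr : sincN r = Real.sin (Real.pi * r) / (Real.pi * r) := by
      rw [sincN, if_neg (ne_of_gt hr)]
    have hlow : 1 - Real.pi ^ 2 * r ^ 2 / 4 < sincN r := by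
      rw [hsr]
      have := Real.sin_gt_sub_cube (by positivity : 0 < Real.pi * r)
      rw [lt_div_iff₀ (by positivity)]
      nlinarith [pow_pos (mul_pos hpi hr) 3]
    have hhigh : sincN r ≤ 1 := by
      have := abs_sincN_le_one r
      exact le_trans (le_abs_self _) this
    have hpi2 : Real.pi ^ 2 < 12 := by nlinarith [Real.pi_lt_d2]
    have hnn : 0 ≤ (1 / r ^ 2) * (1 - sincN r) :=
      mul_nonneg (by positivity) (by linarith)
    have : |(1 / r ^ 2) * (1 - sincN r)| ≤ 3 := by
      rw [abs_of_nonneg hnn, div_mul_eq_mul_div, one_mul, div_le_iff₀ (by positivity)]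
      nlinarith
    linarith
  have hcb : (𝓝[>] (0:ℝ)).IsCoboundedUnder (· ≥ ·) F := by
    have hbd : (𝓝[>] (0:ℝ)).IsBoundedUnder (· ≤ ·) F := ⟨3, by simpa using hub⟩
    exact hbd.isCoboundedUnder_ge
  have : (1:ℝ)/2 ≤ Filter.liminf F (𝓝[>] (0:ℝ)) := le_liminf_of_le hcb hlb
  linarith
end
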